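/- Let K be a finite-dimensional Lie algebra over an infinite field k with basis x_1,…,x_n, and let ψ_1,…,ψ_n be the dual basis of K*. Then there exists a nonzero polynomial P ∈ k[T_1,…,T_n] such that for every tuple (t_1,…,t_n) ∈ k^n with P(t_1,…,t_n) ≠ 0, the linear functional f = t_1ψ_1 + … + t_nψ_n satisfies dim K^f = ind(K); in particular such a tuple exists, so generic functionals attain the index. -/

import Mathlib

variable (k K : Type*) [Field k] [LieRing K] [LieAlgebra k K]

/-- The stabilizer `K^f = {x ∈ K : f ⁅x, y⁆ = 0 for all y ∈ K}`, as a subspace of `K`. -/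
def lieStab (f : Module.Dual k K) : Submodule k K where
  carrier := {x : K | ∀ y : K, f ⁅x, y⁆ = 0}
  add_mem' := by
    intro a b ha hb y
    simp [add_lie, ha y, hb y]
  zero_mem' := by intro y; simp
  smul_mem' := by
    intro c a ha y
    simp [smul_lie, ha y]

/-- lieStab as kernel -/
theorem lieStab_eq_ker (f : Module.Dual k K) (n : ℕ) (b : Module.Basis (Fin n) k K) :
    lieStab k K f = LinearMap.ker
      ((Matrix.of fun i j => f ⁅b j, b i⁆).mulVecLin ∘ₗ
        (b.equivFun : K →ₗ[k] (Fin n → k))) := by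
  have hx : ∀ (x : K) (i : Fin n),
      ((Matrix.of fun i j => f ⁅b j, b i⁆).mulVecLin (b.equivFun x)) i = f ⁅x, b i⁆ := by
    intro x i
    set L : K →ₗ[k] k :=
      { toFun := fun z => f ⁅z, b i⁆
        map_add' := fun a c => by simp [add_lie]
        map_smul' := fun c a => by simp [smul_lie] } with hL
    have : f ⁅x, b i⁆ = L (∑ j, b.equivFun x j • b j) := by
      rw [b.sum_equivFun]; simp [hL]
    rw [this, map_sum]
    simp only [map_smul, hL, LinearMap.coe_mk, AddHom.coe_mk, smul_eq_mul]
    simp [Matrix.mulVecLin_apply, Matrix.mulVec, dotProduct, mul_comm]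
  ext x
  simp only [lieStab, Submodule.mem_mk, AddSubmonoid.mem_mk, AddSubsemigroup.mem_mk,
    Set.mem_setOf_eq, LinearMap.mem_ker, LinearMap.comp_apply, LinearEquiv.coe_coe]
  constructor
  · intro h
    funext i
    rw [hx x i, h (b i)]; rfl
  · intro h y
    have key : ∀ i, f ⁅x, b i⁆ = 0 := by
      intro i
      rw [← hx x i, h]; rfl
    have : (f ∘ₗ LieAlgebra.ad k K x) = 0 := b.ext fun i => by simpa using key i
    simpa using LinearMap.congr_fun this y

theorem finrank_lieStab_add_rank [FiniteDimensional k K] (f : Module.Dual k K)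
    (n : ℕ) (b : Module.Basis (Fin n) k K) :
    Module.finrank k (lieStab k K f) + (Matrix.of fun i j => f ⁅b j, b i⁆).rank = n := by
  set A := (Matrix.of fun i j => f ⁅b j, b i⁆) with hA
  set L := A.mulVecLin ∘ₗ (b.equivFun : K →ₗ[k] (Fin n → k)) with hLdef
  have h1 : Module.finrank k (lieStab k K f) = Module.finrank k (LinearMap.ker L) := by
    rw [lieStab_eq_ker k K f n b]
  have h2 : LinearMap.range L = LinearMap.range A.mulVecLin := by
    rw [hLdef, LinearMap.range_comp, LinearEquiv.range, Submodule.map_top]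
  have h3 : A.rank = Module.finrank k (LinearMap.range L) := by
    rw [Matrix.rank, h2]
  rw [h1, h3, add_comm, LinearMap.finrank_range_add_finrank_ker L,
    Module.finrank_eq_card_basis b, Fintype.card_fin]

theorem exists_WU {n : ℕ} (A : Matrix (Fin n) (Fin n) k) :
    ∃ (W : Matrix (Fin A.rank) (Fin n) k) (U : Matrix (Fin n) (Fin A.rank) k),
      W * A * U = 1 := by
  classical
  set r := A.rank with hr
  set R := LinearMap.range A.mulVecLin with hR
  have hfin : Module.finrank k R = r := rfl
  obtain ⟨v⟩ : Nonempty (Module.Basis (Fin r) k R) := ⟨Module.finBasisOfFinrankEq k R hfin⟩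
  -- choose preimages
  have hv : ∀ q : Fin r, ∃ x : Fin n → k, A.mulVecLin x = (v q : Fin n → k) := fun q =>
    (v q).2
  choose u hu using hv
  -- projection
  obtain ⟨Q, hQ⟩ := Submodule.exists_isCompl R
  set π := R.projectionOnto Q hQ with hπ
  set w : (Fin n → k) →ₗ[k] (Fin r → k) := (v.equivFun : R →ₗ[k] (Fin r → k)) ∘ₗ π with hw
  refine ⟨LinearMap.toMatrix' w, Matrix.of fun i q => u q i, ?_⟩
  ext p q
  have h1 : (LinearMap.toMatrix' w * A * Matrix.of fun i q => u q i) p q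
      = ((LinearMap.toMatrix' w * A).mulVec (u q)) p := by
    simp [Matrix.mul_apply, Matrix.mulVec, dotProduct]
  rw [h1, ← Matrix.mulVec_mulVec]
  have h2 : A.mulVec (u q) = (v q : Fin n → k) := hu q
  rw [h2]
  have h3 : (LinearMap.toMatrix' w).mulVec (v q : Fin n → k) = w (v q : Fin n → k) := by
    rw [← Matrix.toLin'_apply, Matrix.toLin'_toMatrix']
  rw [h3, hw]
  have h4 : π (v q : Fin n → k) = v q := Submodule.projectionOnto_apply_left hQ (v q)
  simp only [LinearMap.comp_apply, h4, LinearEquiv.coe_coe]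
  rw [Module.Basis.equivFun_apply]
  simp [Module.Basis.repr_self, Finsupp.single_apply, Matrix.one_apply, eq_comm]

/-- Let `K` be a finite-dimensional Lie algebra over an infinite field with basis
`x_1, …, x_n` and dual basis `ψ_1, …, ψ_n` of `K*`.  There is a nonzero polynomial
`P ∈ k[T_1,…,T_n]` such that whenever `P(t) ≠ 0`, the functional `f = ∑ t_i ψ_i`
satisfies `dim K^f = ind K = min over f of dim K^f`; in particular such a tuple `t`
exists, so generic functionals attain the index. -/
theorem exists_polynomial_generic_functional_attains_index
    [Infinite k] [FiniteDimensional k K] (n : ℕ) (b : Module.Basis (Fin n) k K) :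
    ∃ P : MvPolynomial (Fin n) k, P ≠ 0 ∧
      (∀ t : Fin n → k, MvPolynomial.eval t P ≠ 0 →
        Module.finrank k (lieStab k K (∑ i, t i • b.dualBasis i)) =
          sInf {m : ℕ | ∃ f : Module.Dual k K,
            Module.finrank k (lieStab k K f) = m}) ∧
      ∃ t : Fin n → k, MvPolynomial.eval t P ≠ 0 := by
  classical
  set A : Module.Dual k K → Matrix (Fin n) (Fin n) k :=
    fun f => Matrix.of fun i j => f ⁅b j, b i⁆ with hA
  have hrk : ∀ f : Module.Dual k K,
      Module.finrank k (lieStab k K f) + (A f).rank = n := fun f =>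
    finrank_lieStab_add_rank k K f n b
  set S : Set ℕ := Set.range fun f : Module.Dual k K => (A f).rank with hS
  have hbdd : BddAbove S := by
    refine ⟨n, ?_⟩
    rintro s ⟨f, rfl⟩
    show (A f).rank ≤ n
    have := hrk f
    omega
  have hne : S.Nonempty := ⟨(A 0).rank, 0, rfl⟩
  obtain ⟨f0, hf0⟩ := Nat.sSup_mem hne hbdd
  have hf0' : (A f0).rank = sSup S := hf0
  obtain ⟨W, U, hWU⟩ := exists_WU k (A f0)
  set Apoly : Matrix (Fin n) (Fin n) (MvPolynomial (Fin n) k) :=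
    Matrix.of fun i j => ∑ l, MvPolynomial.C (b.dualBasis l ⁅b j, b i⁆) * MvPolynomial.X l
    with hApoly
  set P := ((W.map MvPolynomial.C : Matrix _ _ (MvPolynomial (Fin n) k)) * Apoly *
    (U.map MvPolynomial.C : Matrix _ _ (MvPolynomial (Fin n) k))).det with hP
  have hev : ∀ t : Fin n → k,
      Apoly.map (MvPolynomial.eval t) = A (∑ i, t i • b.dualBasis i) := by
    intro t
    ext i j
    simp only [hApoly, hA, Matrix.map_apply, Matrix.of_apply, map_sum, map_mul,
      MvPolynomial.eval_C, MvPolynomial.eval_X, LinearMap.sum_apply, LinearMap.smul_apply,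
      smul_eq_mul]
    exact Finset.sum_congr rfl fun l _ => mul_comm _ _
  have hevP : ∀ t : Fin n → k,
      MvPolynomial.eval t P = (W * A (∑ i, t i • b.dualBasis i) * U).det := by
    intro t
    rw [hP, RingHom.map_det]
    congr 1
    rw [RingHom.mapMatrix_apply, Matrix.map_mul, Matrix.map_mul, Matrix.map_map, Matrix.map_map, hev]
    have hWm : W.map (⇑(MvPolynomial.eval t) ∘ ⇑MvPolynomial.C) = W := by
      ext i j; simp [Matrix.map_apply]
    have hUm : U.map (⇑(MvPolynomial.eval t) ∘ ⇑MvPolynomial.C) = U := by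
      ext i j; simp [Matrix.map_apply]
    rw [hWm, hUm]
  -- special point
  set t0 : Fin n → k := fun l => b.dualBasis.repr f0 l with ht0
  have hsum0 : (∑ i, t0 i • b.dualBasis i) = f0 := b.dualBasis.sum_repr f0
  have hevP0 : MvPolynomial.eval t0 P = 1 := by
    rw [hevP, hsum0, hWU, Matrix.det_one]
  have hPne : P ≠ 0 := fun h => by simp [h] at hevP0
  -- rank comparison for good t
  have hrank_eq : ∀ t : Fin n → k, MvPolynomial.eval t P ≠ 0 →
      (A (∑ i, t i • b.dualBasis i)).rank = (A f0).rank := by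
    intro t ht
    set f := ∑ i, t i • b.dualBasis i with hf
    have hdet : (W * A f * U).det ≠ 0 := by rw [← hevP]; exact ht
    have hunit : IsUnit (W * A f * U) :=
      (Matrix.isUnit_iff_isUnit_det _).2 (isUnit_iff_ne_zero.2 hdet)
    have h1 : (W * A f * U).rank = (A f0).rank := by
      rw [Matrix.rank_of_isUnit _ hunit, Fintype.card_fin]
    have h2 : (W * A f * U).rank ≤ (A f).rank := by
      calc (W * A f * U).rank = (W * (A f * U)).rank := by rw [Matrix.mul_assoc]
        _ ≤ (A f * U).rank := Matrix.rank_mul_le_right _ _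
        _ ≤ (A f).rank := Matrix.rank_mul_le_left _ _
    have h3 : (A f).rank ≤ (A f0).rank := by
      have : (A f).rank ∈ S := ⟨f, rfl⟩
      have := le_csSup hbdd this
      omega
    omega
  refine ⟨P, hPne, ?_, t0, by rw [hevP0]; exact one_ne_zero⟩
  intro t ht
  have hsinf : sInf {m : ℕ | ∃ f : Module.Dual k K,
      Module.finrank k (lieStab k K f) = m} = n - (A f0).rank := by
    apply le_antisymm
    · apply Nat.sInf_le
      exact ⟨f0, by have := hrk f0; omega⟩
    · refine le_csInf ⟨Module.finrank k (lieStab k K f0), f0, rfl⟩ ?_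
      rintro m ⟨g, rfl⟩
      have h1 := hrk g
      have h2 : (A g).rank ≤ (A f0).rank := by
        have := le_csSup hbdd (⟨g, rfl⟩ : (A g).rank ∈ S)
        omega
      omega
  rw [hsinf]
  have := hrk (∑ i, t i • b.dualBasis i)
  have := hrank_eq t ht
  omega
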